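/- arXiv:2304.10761 — 2 statements merged into one kernel-verified Lean document; each statement's English description precedes it below -/
import Mathlib

section
/- Let r : [0,T] → ℝ be differentiable and positive with r'(t) = (G₁(t)+G₂(t))·r(t)^n for continuous functions G₁, G₂, and suppose v₁, v₂ are differentiable with v₁ + v₂ = (4/3)π r³, v₁'(t) = 4π r(t)^{n+2} G₁(t), and v₂'(t) = 4π r(t)^{n+2} G₂(t). Then the composition f = v₁/(v₁+v₂) satisfies f'(t) = (3G₁(t) - 3(G₁(t)+G₂(t))·f(t)) / r(t)^{1-n}. -/
open Real Set

/-- Derivation of the composition growth law: if `r' = (G₁+G₂) r^n`, the component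
volumes satisfy `v₁+v₂ = (4/3)π r³`, `v₁' = 4π r^{n+2} G₁`, `v₂' = 4π r^{n+2} G₂`,
then the composition `f = v₁/(v₁+v₂)` satisfies
`f' = (3G₁ - 3(G₁+G₂) f)/r^{1-n}`. -/
theorem stmt4 (G₁ G₂ r v₁ v₂ : ℝ → ℝ) (n : ℤ) (hn : n ≤ 0)
    (hG₁ : Continuous G₁) (hG₂ : Continuous G₂)
    (hrpos : ∀ t : ℝ, 0 < r t)
    (hr : ∀ t : ℝ, HasDerivAt r ((G₁ t + G₂ t) * r t ^ (n:ℝ)) t)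
    (hsum : ∀ t : ℝ, v₁ t + v₂ t = (4/3) * Real.pi * r t ^ 3)
    (hv₁ : ∀ t : ℝ, HasDerivAt v₁ (4 * Real.pi * r t ^ ((n:ℝ) + 2) * G₁ t) t)
    (hv₂ : ∀ t : ℝ, HasDerivAt v₂ (4 * Real.pi * r t ^ ((n:ℝ) + 2) * G₂ t) t)
    (t : ℝ) :
    HasDerivAt (fun s => v₁ s / (v₁ s + v₂ s))
      ((3 * G₁ t - 3 * (G₁ t + G₂ t) * (v₁ t / (v₁ t + v₂ t))) / r t ^ ((1:ℝ) - n))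
      t := by
  have hp : 0 < r t := hrpos t
  have hpne : r t ≠ 0 := hp.ne'
  have hS : 0 < v₁ t + v₂ t := by
    rw [hsum t]; positivity
  have hSne : v₁ t + v₂ t ≠ 0 := hS.ne'
  have hd := (hv₁ t).div ((hv₁ t).add (hv₂ t)) hSne
  refine hd.congr_deriv ?_
  have h1 : r t ^ ((n:ℝ) + 2) = r t ^ n * r t ^ 2 := by
    rw [show ((n:ℝ) + 2) = ((n + 2 : ℤ) : ℝ) by push_cast; ring,
      Real.rpow_intCast, zpow_add₀ hpne]
    norm_cast
  have h2 : r t ^ ((1:ℝ) - n) = r t / r t ^ n := by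
    rw [show ((1:ℝ) - n) = ((1 - n : ℤ) : ℝ) by push_cast; ring,
      Real.rpow_intCast, zpow_sub₀ hpne]
    norm_num
  have hzn : (r t : ℝ) ^ n ≠ 0 := zpow_ne_zero n hpne
  rw [h1, h2, Pi.add_apply, hsum t]
  have hpi : Real.pi ≠ 0 := Real.pi_ne_zero
  field_simp
end

section
/- Let g : [0,T] → ℝ be continuous nonnegative with g(0) > 0, n ≤ 0, and consider two initial radii 0 < a < b with characteristics ξ_a(t) = (a^{1-n} + (1-n)∫_0^t g)^{1/(1-n)} and ξ_b likewise. Then for n < 0 the absolute size difference contracts: t ↦ ξ_b(t) - ξ_a(t) is strictly decreasing on any interval where g > 0 (size focusing), while for n = 0 the difference ξ_b(t) - ξ_a(t) = b - a is constant. -/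
open Real Set intervalIntegral

lemma key_anti (q A B : ℝ) (hq0 : 0 < q) (hq1 : q < 1) (hA : 0 < A) (hAB : A < B) :
    StrictAntiOn (fun x => (B + x) ^ q - (A + x) ^ q) (Ici (0:ℝ)) := by
  have hB : 0 < B := hA.trans hAB
  apply strictAntiOn_of_deriv_neg (convex_Ici 0)
  · apply ContinuousOn.sub
    · exact ContinuousOn.rpow_const (by fun_prop) fun x hx => Or.inl (by
        have : (0:ℝ) ≤ x := hx; positivity)
    · exact ContinuousOn.rpow_const (by fun_prop) fun x hx => Or.inl (by
        have : (0:ℝ) ≤ x := hx; positivity)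
  · intro x hx
    rw [interior_Ici] at hx
    have hx0 : (0:ℝ) < x := hx
    have hBx : (0:ℝ) < B + x := by linarith
    have hAx : (0:ℝ) < A + x := by linarith
    have h1 : HasDerivAt (fun y => (B + y) ^ q) (q * (B + x) ^ (q - 1) * 1) x := by
      exact (Real.hasDerivAt_rpow_const (Or.inl hBx.ne')).comp x
        ((hasDerivAt_id x).const_add B)
    have h2 : HasDerivAt (fun y => (A + y) ^ q) (q * (A + x) ^ (q - 1) * 1) x := by
      exact (Real.hasDerivAt_rpow_const (Or.inl hAx.ne')).comp x
        ((hasDerivAt_id x).const_add A)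
    rw [HasDerivAt.deriv (by exact h1.sub h2 : HasDerivAt (fun y => (B + y) ^ q - (A + y) ^ q)
      (q * (B + x) ^ (q - 1) * 1 - q * (A + x) ^ (q - 1) * 1) x)]
    have hlt : (B + x) ^ (q - 1) < (A + x) ^ (q - 1) :=
      Real.rpow_lt_rpow_of_neg hAx (by linarith) (by linarith)
    nlinarith

/-- Size focusing: for `n < 0` the difference of the radius characteristics of two
particles with initial radii `0 < a < b` is strictly decreasing on any interval
where the growth rate `g` is positive, while for `n = 0` it is constant. -/
theorem stmt16 (T : ℝ) (hT : 0 < T) (n : ℤ) (hn : n ≤ 0)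
    (g : ℝ → ℝ) (hg : ContinuousOn g (Icc 0 T))
    (hgnn : ∀ s ∈ Icc (0:ℝ) T, 0 ≤ g s) (hg0 : 0 < g 0)
    (a b : ℝ) (ha : 0 < a) (hab : a < b) :
    (n < 0 →
      ∀ s ∈ Icc (0:ℝ) T, ∀ t ∈ Icc (0:ℝ) T, s < t →
        (∀ u ∈ Icc s t, 0 < g u) →
        ((b ^ ((1:ℝ) - n) + ((1:ℝ) - n) * ∫ u in (0:ℝ)..t, g u) ^ (((1:ℝ) - n)⁻¹) -
            (a ^ ((1:ℝ) - n) + ((1:ℝ) - n) * ∫ u in (0:ℝ)..t, g u) ^ (((1:ℝ) - n)⁻¹))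
          <
          ((b ^ ((1:ℝ) - n) + ((1:ℝ) - n) * ∫ u in (0:ℝ)..s, g u) ^ (((1:ℝ) - n)⁻¹) -
            (a ^ ((1:ℝ) - n) + ((1:ℝ) - n) * ∫ u in (0:ℝ)..s, g u) ^ (((1:ℝ) - n)⁻¹))) ∧
    (n = 0 →
      ∀ t ∈ Icc (0:ℝ) T,
        (b ^ ((1:ℝ) - n) + ((1:ℝ) - n) * ∫ u in (0:ℝ)..t, g u) ^ (((1:ℝ) - n)⁻¹) -
          (a ^ ((1:ℝ) - n) + ((1:ℝ) - n) * ∫ u in (0:ℝ)..t, g u) ^ (((1:ℝ) - n)⁻¹)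
          = b - a) := by
  constructor
  · intro hneg s hs t ht hst hpos
    set p : ℝ := (1:ℝ) - n with hp
    have hn1 : (n:ℝ) ≤ -1 := by exact_mod_cast (by omega : n ≤ -1)
    have hp2 : (2:ℝ) ≤ p := by simp [hp]; linarith
    have hp0 : 0 < p := by linarith
    have hq0 : 0 < p⁻¹ := by positivity
    have hq1 : p⁻¹ < 1 := by
      rw [inv_lt_one_iff₀]; right; linarith
    -- integrals
    have hints : IntervalIntegrable g MeasureTheory.volume 0 s :=
      (hg.mono (by
        intro u hu
        rcases hs with ⟨hs0, hsT⟩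
        rw [uIcc_of_le hs0] at hu
        exact ⟨hu.1, hu.2.trans hsT⟩)).intervalIntegrable
    have hintst : IntervalIntegrable g MeasureTheory.volume s t :=
      (hg.mono (by
        intro u hu
        rcases hs with ⟨hs0, hsT⟩; rcases ht with ⟨ht0, htT⟩
        rw [uIcc_of_le hst.le] at hu
        exact ⟨hs0.trans hu.1, hu.2.trans htT⟩)).intervalIntegrable
    have hIs : 0 ≤ ∫ u in (0:ℝ)..s, g u := by
      apply intervalIntegral.integral_nonneg hs.1
      intro u hu; exact hgnn u ⟨hu.1, hu.2.trans hs.2⟩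
    have hsub : (0:ℝ) < ∫ u in s..t, g u := by
      apply intervalIntegral.intervalIntegral_pos_of_pos_on hintst
      · intro u hu; exact hpos u ⟨hu.1.le, hu.2.le⟩
      · exact hst
    have hsplit : (∫ u in (0:ℝ)..t, g u) = (∫ u in (0:ℝ)..s, g u) + ∫ u in s..t, g u :=
      (intervalIntegral.integral_add_adjacent_intervals hints hintst).symm
    have hIlt : (∫ u in (0:ℝ)..s, g u) < ∫ u in (0:ℝ)..t, g u := by
      rw [hsplit]; linarith
    have hmem_s : p * ∫ u in (0:ℝ)..s, g u ∈ Ici (0:ℝ) := by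
      have : 0 ≤ p * ∫ u in (0:ℝ)..s, g u := by positivity
      exact this
    have hmem_t : p * ∫ u in (0:ℝ)..t, g u ∈ Ici (0:ℝ) := by
      have hIt : 0 ≤ ∫ u in (0:ℝ)..t, g u := by
        rw [hsplit]; linarith
      exact mul_nonneg hp0.le hIt
    have hApos : (0:ℝ) < a ^ p := Real.rpow_pos_of_pos ha p
    have hAB : a ^ p < b ^ p := Real.rpow_lt_rpow ha.le hab hp0
    have := key_anti p⁻¹ (a ^ p) (b ^ p) hq0 hq1 hApos hAB hmem_s hmem_t
      (mul_lt_mul_of_pos_left hIlt hp0)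
    simpa using this
  · intro h0 t ht
    subst h0
    norm_num
end
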